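/- Let G be a recurrent, regular branch subgroup of Aut(X*). Then the maximal branching subgroup G_# is a normal subgroup of G. -/

import Mathlib

open List

/-- Vertices of the regular rooted tree over alphabet `X`: finite words. -/
abbrev Vtx (X : Type*) := List X

section Tree

variable {X : Type*} [DecidableEq X]

/-- A permutation of the vertex set is a rooted-tree automorphism if it fixes the
root and maps children of a vertex to children of its image. -/
def IsTreeAut (f : Equiv.Perm (Vtx X)) : Prop :=
  f [] = [] ∧ ∀ (w : Vtx X) (x : X), ∃ y : X, f (w ++ [x]) = f w ++ [y]

/-- The state (section) of `f` at the vertex `w`, as a function on vertices. -/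
def stateFun (f : Equiv.Perm (Vtx X)) (w : Vtx X) : Vtx X → Vtx X :=
  fun t => (f (w ++ t)).drop w.length

/-- The rigid stabilizer of the vertex `v` in the full automorphism group:
all permutations moving only (proper or improper) descendants of `v`. -/
def rist (v : Vtx X) : Subgroup (Equiv.Perm (Vtx X)) where
  carrier := {g | ∀ w : Vtx X, ¬ v <+: w → g w = w}
  one_mem' := by intro w _; rfl
  mul_mem' := by
    intro a b ha hb w hw
    have : (a * b) w = a (b w) := rfl
    rw [this, hb w hw, ha w hw]
  inv_mem' := by
    intro a ha w hw
    have h := ha w hw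
    conv_lhs => rw [← h]
    exact Equiv.symm_apply_apply a w

/-- The rigid stabilizer of `v` in `G`. -/
def ristG (G : Subgroup (Equiv.Perm (Vtx X))) (v : Vtx X) :
    Subgroup (Equiv.Perm (Vtx X)) :=
  rist v ⊓ G

/-- The `n`-th level rigid stabilizer of `G`: the subgroup generated by the
rigid stabilizers of all vertices of level `n`. -/
def ristLevel (G : Subgroup (Equiv.Perm (Vtx X))) (n : ℕ) :
    Subgroup (Equiv.Perm (Vtx X)) :=
  ⨆ v ∈ {v : Vtx X | v.length = n}, ristG G v

/-- The `n`-th level stabilizer of `G`: elements fixing all vertices of level `≤ n`. -/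
def stabLevel (G : Subgroup (Equiv.Perm (Vtx X))) (n : ℕ) :
    Subgroup (Equiv.Perm (Vtx X)) :=
  G ⊓ { carrier := {g | ∀ w : Vtx X, w.length ≤ n → g w = w}
        one_mem' := by intro w _; rfl
        mul_mem' := by
          intro a b ha hb w hw
          have : (a * b) w = a (b w) := rfl
          rw [this, hb w hw, ha w hw]
        inv_mem' := by
          intro a ha w hw
          have h := ha w hw
          conv_lhs => rw [← h]
          exact Equiv.symm_apply_apply a w }

/-- Underlying function of the vtr `v*g`. -/
def vtrFun (v : Vtx X) (g : Vtx X → Vtx X) : Vtx X → Vtx X :=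
  fun w => if v <+: w then v ++ g (w.drop v.length) else w

lemma vtr_aux (v : Vtx X) (g h : Vtx X → Vtx X)
    (hgh : ∀ t, h (g t) = t) (w : Vtx X) :
    vtrFun v h (vtrFun v g w) = w := by
  by_cases hp : v <+: w
  · obtain ⟨t, rfl⟩ := hp
    simp [vtrFun, List.drop_left, hgh, List.prefix_append]
  · simp [vtrFun, hp]

/-- The vtr `v*g`: the automorphism acting as `g` on the subtree rooted
at `v` and trivially elsewhere. -/
def vtr (v : Vtx X) (g : Equiv.Perm (Vtx X)) : Equiv.Perm (Vtx X) where
  toFun := vtrFun v g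
  invFun := vtrFun v g.symm
  left_inv := vtr_aux v g g.symm fun t => g.symm_apply_apply t
  right_inv := vtr_aux v g.symm g fun t => g.apply_symm_apply t

lemma vtr_apply (v : Vtx X) (g : Equiv.Perm (Vtx X)) (w : Vtx X) :
    vtr v g w = if v <+: w then v ++ g (w.drop v.length) else w := rfl

/-- `g ↦ v*g` as a group homomorphism. -/
def vtrHom (v : Vtx X) : Equiv.Perm (Vtx X) →* Equiv.Perm (Vtx X) where
  toFun := vtr v
  map_one' := by
    ext w
    by_cases hp : v <+: w
    · obtain ⟨t, rfl⟩ := hp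
      simp [vtr, vtrFun, List.drop_left, List.prefix_append]
    · simp [vtr, vtrFun, hp]
  map_mul' := by
    intro a b
    ext w
    have hmul : (vtr v a * vtr v b) w = vtr v a (vtr v b w) := rfl
    rw [hmul]
    by_cases hp : v <+: w
    · obtain ⟨t, rfl⟩ := hp
      simp [vtr, vtrFun, List.drop_left, List.prefix_append]
    · simp [vtr, vtrFun, hp]

/-- `K` is a branching subgroup of `G`: `K ≤ G` and `v*K ≤ K` for all vertices. -/
def IsBranching (G K : Subgroup (Equiv.Perm (Vtx X))) : Prop :=
  K ≤ G ∧ ∀ v : Vtx X, ∀ g ∈ K, vtr v g ∈ K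

/-- The product `X^n * K` of the translates `v*K` over all vertices of level `n`. -/
def levelProd (K : Subgroup (Equiv.Perm (Vtx X))) (n : ℕ) :
    Subgroup (Equiv.Perm (Vtx X)) :=
  Subgroup.closure {p | ∃ v : Vtx X, v.length = n ∧ ∃ g ∈ K, p = vtr v g}

/-- The group `G⋉v` of states at `v` of the rigid stabilizer:
those `g ∈ G` with `v*g ∈ G`. -/
def pristSub (G : Subgroup (Equiv.Perm (Vtx X))) (v : Vtx X) :
    Subgroup (Equiv.Perm (Vtx X)) :=
  G ⊓ G.comap (vtrHom v)

/-- `G_#`, the intersection of all `G⋉v` (the maximal branching subgroup when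
`G` is regular branch). -/
def Gsharp (G : Subgroup (Equiv.Perm (Vtx X))) : Subgroup (Equiv.Perm (Vtx X)) :=
  ⨅ v : Vtx X, pristSub G v

/-- `G` is self-similar: all states of elements of `G` are (induced by) elements of `G`. -/
def SelfSimilar (G : Subgroup (Equiv.Perm (Vtx X))) : Prop :=
  ∀ g ∈ G, ∀ w : Vtx X, ∃ h ∈ G, ∀ t : Vtx X, h t = stateFun g w t

/-- `G` is level-transitive: transitive on each level of the tree. -/
def LevelTransitive (G : Subgroup (Equiv.Perm (Vtx X))) : Prop :=
  ∀ v w : Vtx X, v.length = w.length → ∃ g ∈ G, g v = w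

/-- `G` is recurrent: the state at `v` of the stabilizer of `v` is all of `G`. -/
def Recurrent (G : Subgroup (Equiv.Perm (Vtx X))) : Prop :=
  ∀ v : Vtx X, ∀ h : Equiv.Perm (Vtx X),
    (h ∈ G ↔ ∃ g ∈ G, g v = v ∧ ∀ t : Vtx X, h t = stateFun g v t)

/-- `G` is a regular branch group (for this action): it has a non-trivial
branching subgroup `K` with all products `X^n*K` of finite index in `G`. -/
def RegularBranch (G : Subgroup (Equiv.Perm (Vtx X))) : Prop :=
  ∃ K : Subgroup (Equiv.Perm (Vtx X)), IsBranching G K ∧ K ≠ ⊥ ∧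
    ∀ n : ℕ, ((levelProd K n).subgroupOf G).FiniteIndex

/-- The subgroup generated by `e`-th powers of elements of `H`. -/
def powSubgroup {P : Type*} [Group P] (H : Subgroup P) (e : ℕ) : Subgroup P :=
  Subgroup.closure {x | ∃ h ∈ H, x = h ^ e}

/-- The normal closure of `g` in the subgroup `Γ`. -/
def nclosure {P : Type*} [Group P] (Γ : Subgroup P) (g : P) : Subgroup P :=
  Subgroup.closure {x | ∃ h ∈ Γ, x = h * g * h⁻¹}

/-- `g` is finite-state: it has only finitely many states. -/
def FiniteState (g : Equiv.Perm (Vtx X)) : Prop :=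
  {f : Vtx X → Vtx X | ∃ w : Vtx X, f = stateFun g w}.Finite

/-- `g` fixes the boundary ray `y`, i.e. it fixes each of its finite prefixes. -/
def fixesRay (g : Equiv.Perm (Vtx X)) (y : ℕ → X) : Prop :=
  ∀ n : ℕ, g ((List.range n).map y) = (List.range n).map y

end Tree

/-- A group satisfies a (non-trivial) group law. -/
def SatisfiesLaw (G : Type*) [Group G] : Prop :=
  ∃ w : FreeGroup ℕ, w ≠ 1 ∧ ∀ φ : FreeGroup ℕ →* G, φ w = 1

section Aux

variable {X : Type*} [DecidableEq X]

lemma perm_apply_inv_self {α : Type*} (f : Equiv.Perm α) (x : α) : f (f⁻¹ x) = x :=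
  (Equiv.eq_symm_apply f).mp rfl

lemma perm_inv_apply_self {α : Type*} (f : Equiv.Perm α) (x : α) : f⁻¹ (f x) = x :=
  Equiv.Perm.inv_eq_iff_eq.mpr rfl

lemma isTreeAut_length {f : Equiv.Perm (Vtx X)} (hf : IsTreeAut f) :
    ∀ w : Vtx X, (f w).length = w.length := by
  intro w
  induction w using List.reverseRecOn with
  | nil => simp [hf.1]
  | append_singleton w x ih =>
      obtain ⟨y, hy⟩ := hf.2 w x
      simp [hy, ih]

lemma isTreeAut_append {f : Equiv.Perm (Vtx X)} (hf : IsTreeAut f) (w : Vtx X) :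
    ∀ t : Vtx X, ∃ s : Vtx X, f (w ++ t) = f w ++ s := by
  intro t
  induction t using List.reverseRecOn with
  | nil => exact ⟨[], by simp⟩
  | append_singleton t x ih =>
      obtain ⟨s, hs⟩ := ih
      obtain ⟨y, hy⟩ := hf.2 (w ++ t) x
      exact ⟨s ++ [y], by rw [← List.append_assoc, hy, hs, List.append_assoc]⟩

lemma ghat_apply {f : Equiv.Perm (Vtx X)} (hf : IsTreeAut f) (g : Equiv.Perm (Vtx X))
    (v : Vtx X) (hv : f v = v) (hst : ∀ t : Vtx X, g t = stateFun f v t) (t : Vtx X) :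
    f (v ++ t) = v ++ g t := by
  obtain ⟨s, hs⟩ := isTreeAut_append hf v t
  rw [hs, hv]
  congr 1
  rw [hst t, stateFun, hs, hv, List.drop_left]

end Aux

/-- For a recurrent regular branch group, the maximal branching
subgroup `G_#` is normal in `G`. -/
theorem Gsharp_normal_of_recurrent
    {X : Type*} [DecidableEq X] [Fintype X]
    (G : Subgroup (Equiv.Perm (Vtx X))) (hAut : ∀ g ∈ G, IsTreeAut g)
    (hRec : Recurrent G) (hRB : RegularBranch G) :
    ∀ g ∈ G, ∀ k ∈ Gsharp G, g * k * g⁻¹ ∈ Gsharp G := by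
  intro g hg k hk
  rw [Gsharp, Subgroup.mem_iInf] at hk ⊢
  intro v
  have hkv := hk v
  rw [pristSub, Subgroup.mem_inf, Subgroup.mem_comap] at hkv ⊢
  have hkG : k ∈ G := hkv.1
  refine ⟨mul_mem (mul_mem hg hkG) (inv_mem hg), ?_⟩
  -- get ĝ ∈ G fixing v with state g at v
  obtain ⟨f, hf, hfv, hst⟩ := (hRec v g).mp hg
  have hfaut : IsTreeAut f := hAut f hf
  have hkey : ∀ t : Vtx X, f (v ++ t) = v ++ g t := ghat_apply hfaut g v hfv hst
  have hkeyinv : ∀ t : Vtx X, f⁻¹ (v ++ t) = v ++ g⁻¹ t := by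
    intro t
    have := hkey (g⁻¹ t)
    rw [perm_apply_inv_self] at this
    rw [← this, perm_inv_apply_self]
  -- prefix preservation under f⁻¹
  have hpref : ∀ w : Vtx X, v <+: f⁻¹ w ↔ v <+: w := by
    intro w
    constructor
    · rintro ⟨t, ht⟩
      have : w = v ++ g t := by
        rw [← hkey t, ht, perm_apply_inv_self]
      exact this ▸ List.prefix_append v (g t)
    · rintro ⟨t, rfl⟩
      exact (hkeyinv t) ▸ List.prefix_append v (g⁻¹ t)
  -- the crucial identity: vtr v (g k g⁻¹) = f * vtr v k * f⁻¹
  have hid : vtrHom v (g * k * g⁻¹) = f * (vtrHom v k) * f⁻¹ := by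
    ext w
    have hrhs : (f * (vtrHom v k) * f⁻¹) w = f (vtr v k (f⁻¹ w)) := rfl
    have hlhs : (vtrHom v (g * k * g⁻¹)) w = vtr v (g * k * g⁻¹) w := rfl
    rw [hrhs, hlhs, vtr_apply]
    by_cases hp : v <+: w
    · obtain ⟨t, rfl⟩ := hp
      rw [if_pos (List.prefix_append v t), List.drop_left]
      rw [hkeyinv t, vtr_apply, if_pos (List.prefix_append v (g⁻¹ t)), List.drop_left,
        hkey (k (g⁻¹ t))]
      rfl
    · rw [if_neg hp, vtr_apply, if_neg (fun h => hp ((hpref w).mp h)),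
        perm_apply_inv_self]
  rw [hid]
  have hvk : vtrHom v k ∈ G := hkv.2
  exact mul_mem (mul_mem hf hvk) (inv_mem hf)
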